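/- arXiv:1902.02415 — 2 statements merged into one kernel-verified Lean document; each statement's English description precedes it below -/
import Mathlib

section
/- If the root system is simply-laced, then for every positive root α one has ℓ(s_α) = ⟨2ρ, α∨⟩ − 1. -/
open Finset

noncomputable section

/-- A root system is a root pairing for which the roots span their ambient module
(the meaning of Mathlib's former `RootSystem`). -/
structure RootSystem (ι R M N : Type*) [CommRing R] [AddCommGroup M] [Module R M]
    [AddCommGroup N] [Module R N] extends RootPairing ι R M N where
  span_eq_top : Submodule.span R (Set.range root) = ⊤

namespace QBG

variable {ι V V' : Type*} [Fintype ι] [AddCommGroup V] [Module ℝ V]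
  [AddCommGroup V'] [Module ℝ V']

variable (P : RootSystem ι ℝ V V') (f : V →ₗ[ℝ] ℝ)

/-- `k` indexes a positive root (w.r.t. the regular linear functional `f`). -/
def Pos (k : ι) : Prop := 0 < f (P.root k)

/-- `k` indexes a simple root: positive and not a sum of two positive roots. -/
def IsSimple (k : ι) : Prop := Pos P f k ∧
  ¬ ∃ i j : ι, Pos P f i ∧ Pos P f j ∧ P.root k = P.root i + P.root j

/-- The reflection `s_α` associated to the root indexed by `k`. -/
def refl (k : ι) : V ≃ₗ[ℝ] V := P.reflection k

/-- `l` is a word in simple reflections with product `w`. -/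
def Wrd (w : V ≃ₗ[ℝ] V) (l : List ι) : Prop :=
  (∀ i ∈ l, IsSimple P f i) ∧ (l.map (refl P)).prod = w

/-- `w` lies in the Weyl group (generated by simple reflections). -/
def InW (w : V ≃ₗ[ℝ] V) : Prop := ∃ l, Wrd P f w l

/-- Coxeter length of `w` with respect to the simple reflections. -/
def len (w : V ≃ₗ[ℝ] V) : ℕ := sInf {n | ∃ l, Wrd P f w l ∧ l.length = n}

/-- The pairing `⟨2ρ, α_k^∨⟩` where `ρ` is the half-sum of positive roots. -/
def tworho (k : ι) : ℝ := ∑ i, if 0 < f (P.root i) then P.pairing i k else 0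

/-- An upward edge of the quantum Bruhat graph, from `w`, labeled `k`. -/
def UpStep (w : V ≃ₗ[ℝ] V) (k : ι) : Prop :=
  Pos P f k ∧ len P f (w * refl P k) = len P f w + 1

/-- A downward edge of the quantum Bruhat graph, from `w`, labeled `k`. -/
def DownStep (w : V ≃ₗ[ℝ] V) (k : ι) : Prop :=
  Pos P f k ∧ (len P f (w * refl P k) : ℝ) = (len P f w : ℝ) - tworho P f k + 1

/-- An edge of the quantum Bruhat graph, from `w`, labeled `k`. -/
def Step (w : V ≃ₗ[ℝ] V) (k : ι) : Prop := UpStep P f w k ∨ DownStep P f w k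

/-- `ks` is the list of labels of a directed path in the quantum Bruhat graph
starting at `w`. -/
def ValidPath : (V ≃ₗ[ℝ] V) → List ι → Prop
  | _, [] => True
  | w, k :: ks => Step P f w k ∧ ValidPath (w * refl P k) ks

/-- `ks` is the list of labels of an all-downward path starting at `w`. -/
def DownPath : (V ≃ₗ[ℝ] V) → List ι → Prop
  | _, [] => True
  | w, k :: ks => DownStep P f w k ∧ DownPath (w * refl P k) ks

/-- `ks` is the list of labels of an all-upward path starting at `w`. -/
def UpPath : (V ≃ₗ[ℝ] V) → List ι → Prop
  | _, [] => True
  | w, k :: ks => UpStep P f w k ∧ UpPath (w * refl P k) ks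

/-- The endpoint of the path starting at `w` with edge labels `ks`. -/
def pathEnd (w : V ≃ₗ[ℝ] V) (ks : List ι) : V ≃ₗ[ℝ] V := w * (ks.map (refl P)).prod

/-- The distance `d_Γ(u,v)` in the quantum Bruhat graph. -/
def dist (u v : V ≃ₗ[ℝ] V) : ℕ :=
  sInf {n | ∃ ks, ValidPath P f u ks ∧ pathEnd P u ks = v ∧ ks.length = n}

/-- The all-downward distance `d_↓(w)` from `w` to the identity. -/
def ddown (w : V ≃ₗ[ℝ] V) : ℕ :=
  sInf {n | ∃ ks, DownPath P f w ks ∧ pathEnd P w ks = 1 ∧ ks.length = n}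

open Classical in
/-- The pairing of `2ρ` with the weight of the path `(w, ks)`, i.e. the sum of
`⟨2ρ, α^∨⟩` over the downward edges of the path. -/
def downWeight : (V ≃ₗ[ℝ] V) → List ι → ℝ
  | _, [] => 0
  | w, k :: ks =>
      (if UpStep P f w k then 0 else tworho P f k) + downWeight (w * refl P k) ks

/-- `w` contains `v`: `w = u * v * u'` length-additively. -/
def Contains (w v : V ≃ₗ[ℝ] V) : Prop :=
  ∃ u u', InW P f u ∧ InW P f u' ∧ w = u * v * u' ∧
    len P f w = len P f u + len P f v + len P f u'

/-- `w` is small-height-avoiding: it contains no non-simple reflection `s_β`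
with `ℓ(s_β) = ⟨2ρ, β^∨⟩ - 1`. -/
def SmallHeightAvoiding (w : V ≃ₗ[ℝ] V) : Prop :=
  ¬ ∃ k : ι, Pos P f k ∧ ¬ IsSimple P f k ∧
      (len P f (refl P k) : ℝ) = tworho P f k - 1 ∧ Contains P f w (refl P k)

/-- The root system `P` is reduced. -/
def Reduced : Prop := ∀ i j : ι, P.root i ≠ (2 : ℝ) • P.root j

/-- The linear functional `f` is regular: it vanishes on no root. -/
def Regular : Prop := ∀ i : ι, f (P.root i) ≠ 0



section Aux

open RootPairing Finset
open scoped Classical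

variable {P} {f}

/-! ### Basic facts about the root form and pairings -/

lemma rootForm_posdef {x : V} (hx : x ≠ 0) : 0 < P.RootForm x x :=
  P.rootForm_pos_of_ne_zero (by rw [RootPairing.rootSpan, P.span_eq_top]; exact Submodule.mem_top) hx

lemma rootForm_comm (x y : V) : P.RootForm x y = P.RootForm y x := by
  simpa using LinearMap.isSymm_def.mp P.rootForm_symmetric x y

/-- `B(αᵢ,αᵢ) ⟨αⱼ, αᵢ^∨⟩ = 2 B(αⱼ, αᵢ)`. -/
lemma rootForm_pairing (i j : ι) :
    P.RootForm (P.root i) (P.root i) * P.pairing j i =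
      2 * P.RootForm (P.root j) (P.root i) := by
  have h := congrArg (P.toLinearMap (P.root j)) (P.rootForm_self_smul_coroot i)
  have h2 : P.toLinearMap (P.root j) (P.Polarization (P.root i))
      = P.RootForm (P.root i) (P.root j) := by
    rw [Polarization_apply, map_sum, rootForm_apply_apply]
    refine Finset.sum_congr rfl fun m _ => ?_
    rw [map_smul, smul_eq_mul, root_coroot_eq_pairing, ← root_coroot'_eq_pairing]
  rw [map_smul, map_nsmul, smul_eq_mul, nsmul_eq_mul, root_coroot_eq_pairing, h2] at h
  rw [h, rootForm_comm]
  norm_num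

lemma pairing_int (hP : P.IsCrystallographic) (i j : ι) :
    ∃ z : ℤ, (z : ℝ) = P.pairing i j :=
  by obtain ⟨z, hz⟩ := hP.exists_value i j; exact ⟨z, by simpa using hz⟩

/-- Classification of pairings in a simply-laced crystallographic root system. -/
lemma pairing_cases (hP : P.IsCrystallographic)
    (hSL : ∀ i j : ι, P.pairing i j = P.pairing j i) (i j : ι) :
    P.pairing i j = 0 ∨ P.pairing i j = 1 ∨ P.pairing i j = -1 ∨
      (P.pairing i j = 2 ∧ P.root i = P.root j) ∨
      (P.pairing i j = -2 ∧ P.root i = - P.root j) := by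
  set p := P.pairing i j with hp
  set bi := P.RootForm (P.root i) (P.root i) with hbi
  set bj := P.RootForm (P.root j) (P.root j) with hbj
  set c := P.RootForm (P.root i) (P.root j) with hc
  have hbi0 : 0 < bi := rootForm_posdef <| P.ne_zero i
  have hbj0 : 0 < bj := rootForm_posdef <| P.ne_zero j
  have h1 : bj * p = 2 * c := rootForm_pairing j i
  have h2 : bi * p = 2 * c := by
    have h := rootForm_pairing (P := P) i j
    rw [← hSL i j, ← hp] at h
    rw [h, rootForm_comm]
  have key : P.RootForm (bj • P.root i - c • P.root j) (bj • P.root i - c • P.root j)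
      = bj * (bi * bj - c * c) := by
    simp only [map_sub, map_smul, LinearMap.sub_apply, LinearMap.smul_apply, smul_eq_mul,
      ← hbi, ← hbj, ← hc]
    rw [rootForm_comm (P.root j) (P.root i), ← hc]
    ring
  have hCS : c * c ≤ bi * bj := by
    have h0 : 0 ≤ bj * (bi * bj - c * c) := key ▸ P.zero_le_rootForm _
    nlinarith
  have hsq : p * p ≤ 4 := by
    have h4 : (bi * p) * (bj * p) = 4 * (c * c) := by rw [h1, h2]; ring
    nlinarith [mul_pos hbi0 hbj0]
  obtain ⟨z, hz⟩ := pairing_int hP i j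
  rw [← hp] at hz
  have hz4 : z * z ≤ 4 := by exact_mod_cast hz ▸ hsq
  have hzb : -2 ≤ z ∧ z ≤ 2 := by constructor <;> nlinarith
  have hzmem : z = 0 ∨ z = 1 ∨ z = -1 ∨ z = 2 ∨ z = -2 := by omega
  rcases hzmem with h | h | h | h | h
  · left; rw [← hz, h]; norm_num
  · right; left; rw [← hz, h]; norm_num
  · right; right; left; rw [← hz, h]; norm_num
  · have hp2 : p = 2 := by rw [← hz, h]; norm_num
    have hcj : c = bj := by rw [hp2] at h1; linarith
    have hci : c = bi := by rw [hp2] at h2; linarith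
    have hv : bj • P.root i - c • P.root j = 0 := by
      by_contra hne
      have hpos := rootForm_posdef (P := P) hne
      rw [key] at hpos
      have hz' : bi * bj - c * c = 0 := by rw [← hci, ← hcj]; ring
      rw [hz', mul_zero] at hpos
      exact lt_irrefl 0 hpos
    right; right; right; left
    refine ⟨hp2, ?_⟩
    rw [hcj, ← smul_sub] at hv
    rcases smul_eq_zero.mp hv with h' | h'
    · exact absurd h' (ne_of_gt hbj0)
    · exact sub_eq_zero.mp h'
  · have hp2 : p = -2 := by rw [← hz, h]; norm_num
    have hcj : c = -bj := by rw [hp2] at h1; linarith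
    have hci : c = -bi := by rw [hp2] at h2; linarith
    have hv : bj • P.root i - c • P.root j = 0 := by
      by_contra hne
      have hpos := rootForm_posdef (P := P) hne
      rw [key] at hpos
      have hbi' : bi = -c := by linarith
      have hbj' : bj = -c := by linarith
      have hz' : bi * bj - c * c = 0 := by rw [hbi', hbj']; ring
      rw [hz', mul_zero] at hpos
      exact lt_irrefl 0 hpos
    right; right; right; right
    refine ⟨hp2, ?_⟩
    rw [hcj, neg_smul, sub_neg_eq_add, ← smul_add] at hv
    rcases smul_eq_zero.mp hv with h' | h'
    · exact absurd h' (ne_of_gt hbj0)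
    · rw [eq_neg_iff_add_eq_zero]; exact h'

end Aux

section Aux2

open RootPairing Finset
open scoped Classical

variable {P f}

lemma mul_app (u v : V ≃ₗ[ℝ] V) (x : V) : (u * v) x = u (v x) := rfl
lemma one_app (x : V) : (1 : V ≃ₗ[ℝ] V) x = x := rfl
lemma inv_app (u : V ≃ₗ[ℝ] V) (x : V) : u⁻¹ (u x) = x := u.symm_apply_apply x
lemma app_inv (u : V ≃ₗ[ℝ] V) (x : V) : u (u⁻¹ x) = x := u.apply_symm_apply x

lemma root_neg (i : ι) : P.root (P.reflectionPerm i i) = - P.root i := by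
  rw [root_reflectionPerm, reflection_apply_self]

lemma root_index_neg_eq {a b : ι} (h : P.root a = - P.root b) :
    a = P.reflectionPerm b b :=
  P.root.injective (by rw [root_neg, h])

/-- Lemma A: a simple reflection permutes the positive roots other than its own. -/
lemma pos_reflectionPerm_simple (hP : P.IsCrystallographic) (hreg : Regular P f)
    (hSL : ∀ i j : ι, P.pairing i j = P.pairing j i) {γ : ι} (hγ : IsSimple P f γ)
    {i : ι} (hi : Pos P f i) (hne : i ≠ γ) : Pos P f (P.reflectionPerm γ i) := by
  have hroot : P.root (P.reflectionPerm γ i) = P.root i - P.pairing i γ • P.root γ := by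
    rw [root_reflectionPerm, reflection_apply_root]
  have hfi : 0 < f (P.root i) := hi
  have hfγ : 0 < f (P.root γ) := hγ.1
  have hne0 : f (P.root (P.reflectionPerm γ i)) ≠ 0 := hreg _
  rcases hne0.lt_or_gt with hneg | hpos
  swap
  · exact hpos
  exfalso
  rw [hroot, map_sub, map_smul, smul_eq_mul] at hneg
  rcases pairing_cases hP hSL i γ with h0 | h1 | hm1 | ⟨h2, heq⟩ | ⟨hm2, heq⟩
  · rw [h0] at hneg; linarith
  · -- pairing = 1 : then γ = (γ - αᵢ) + αᵢ is a sum of positive roots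
    set m := P.reflectionPerm γ i with hm
    have hmr : P.root m = P.root i - P.root γ := by
      rw [hm, hroot, h1, one_smul]
    set d := P.reflectionPerm m m with hd
    have hdr : P.root d = P.root γ - P.root i := by
      rw [hd, root_neg, hmr, neg_sub]
    refine hγ.2 ⟨i, d, hi, ?_, ?_⟩
    · show 0 < f (P.root d)
      rw [hdr, map_sub]
      rw [h1, one_mul] at hneg
      have : f (P.root m) = f (P.root i) - f (P.root γ) := by rw [hmr, map_sub]
      linarith
    · rw [hdr]; abel
  · rw [hm1] at hneg; linarith
  · exact hne (P.root.injective heq)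
  · have := congrArg f heq
    rw [map_neg] at this
    linarith

/-- The property of mapping roots to roots (via a permutation of the index set). -/
def RootPerm (P : RootSystem ι ℝ V V') (w : V ≃ₗ[ℝ] V) : Prop :=
  ∃ π : Equiv.Perm ι, ∀ j, w (P.root j) = P.root (π j)

lemma RootPerm.one : RootPerm P (1 : V ≃ₗ[ℝ] V) := ⟨1, fun j => rfl⟩

lemma RootPerm.of_refl (k : ι) : RootPerm P (refl P k) :=
  ⟨P.reflectionPerm k, fun j => (P.root_reflectionPerm k j).symm⟩

lemma RootPerm.mul {w v : V ≃ₗ[ℝ] V} (hw : RootPerm P w) (hv : RootPerm P v) :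
    RootPerm P (w * v) := by
  obtain ⟨π, hπ⟩ := hw
  obtain ⟨τ, hτ⟩ := hv
  exact ⟨π * τ, fun j => by rw [mul_app, hτ, hπ, Equiv.Perm.mul_apply]⟩

lemma RootPerm.inv_apply {w : V ≃ₗ[ℝ] V} {π : Equiv.Perm ι}
    (hπ : ∀ j, w (P.root j) = P.root (π j)) (j : ι) :
    w⁻¹ (P.root j) = P.root (π⁻¹ j) := by
  have h := hπ (π⁻¹ j)
  rw [show π (π⁻¹ j) = j from π.apply_symm_apply j] at h
  rw [← h, inv_app]

lemma RootPerm.inv {w : V ≃ₗ[ℝ] V} (hw : RootPerm P w) : RootPerm P w⁻¹ := by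
  obtain ⟨π, hπ⟩ := hw
  exact ⟨π⁻¹, RootPerm.inv_apply hπ⟩

lemma RootPerm.prod (l : List ι) : RootPerm P ((l.map (refl P)).prod) := by
  induction l with
  | nil => exact RootPerm.one
  | cons a t ih => rw [List.map_cons, List.prod_cons]; exact (RootPerm.of_refl a).mul ih

/-- The set of (indices of) inversions of `w`. -/
def invSet (P : RootSystem ι ℝ V V') (f : V →ₗ[ℝ] ℝ) (w : V ≃ₗ[ℝ] V) : Finset ι :=
  Finset.univ.filter fun i => Pos P f i ∧ f (w (P.root i)) < 0

/-- The number of inversions of `w`. -/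
def ninv (P : RootSystem ι ℝ V V') (f : V →ₗ[ℝ] ℝ) (w : V ≃ₗ[ℝ] V) : ℕ :=
  (invSet P f w).card

lemma mem_invSet {w : V ≃ₗ[ℝ] V} {i : ι} :
    i ∈ invSet P f w ↔ Pos P f i ∧ f (w (P.root i)) < 0 := by
  simp [invSet]

lemma invSet_one : invSet P f 1 = ∅ := by
  ext i
  simp only [mem_invSet, one_app, Finset.notMem_empty, iff_false]
  rintro ⟨h1, h2⟩
  exact absurd h2 (not_lt.mpr (le_of_lt h1))

lemma ninv_one : ninv P f 1 = 0 := by rw [ninv, invSet_one, Finset.card_empty]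

lemma refl_apply_root (k j : ι) :
    (refl P k) (P.root j) = P.root (P.reflectionPerm k j) :=
  (P.root_reflectionPerm k j).symm

lemma refl_apply_self (k : ι) : (refl P k) (P.root k) = - P.root k :=
  P.reflection_apply_self k

lemma refl_mul_self (γ : ι) : refl P γ * refl P γ = 1 := by
  have := P.reflection_sq γ
  rwa [sq] at this

end Aux2

section Aux3

open RootPairing Finset
open scoped Classical

variable {P f}

lemma invSet_mul_refl (hP : P.IsCrystallographic) (hreg : Regular P f)
    (hSL : ∀ i j : ι, P.pairing i j = P.pairing j i) {γ : ι} (hγ : IsSimple P f γ)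
    {w : V ≃ₗ[ℝ] V} (hw : RootPerm P w) (hpos : 0 < f (w (P.root γ))) :
    invSet P f (w * refl P γ) = insert γ ((invSet P f w).image (P.reflectionPerm γ)) := by
  ext i
  simp only [mem_invSet, Finset.mem_insert, Finset.mem_image]
  constructor
  · rintro ⟨hi, hneg⟩
    rcases eq_or_ne i γ with rfl | hne
    · exact Or.inl rfl
    · right
      have key : (w * refl P γ) (P.root i) = w (P.root (P.reflectionPerm γ i)) := by
        rw [mul_app, refl_apply_root]
      rw [key] at hneg
      exact ⟨P.reflectionPerm γ i,
        ⟨pos_reflectionPerm_simple hP hreg hSL hγ hi hne, hneg⟩,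
        P.reflectionPerm_self γ i⟩
  · rintro (heq | ⟨i₀, ⟨hi₀, hneg⟩, heq⟩)
    · rw [heq]
      refine ⟨hγ.1, ?_⟩
      have key : (w * refl P γ) (P.root γ) = w (- P.root γ) := by
        rw [mul_app, refl_apply_self]
      rw [key, map_neg, map_neg]
      linarith
    · rw [← heq]
      have hi₀γ : i₀ ≠ γ := by
        rintro rfl
        linarith
      refine ⟨pos_reflectionPerm_simple hP hreg hSL hγ hi₀ hi₀γ, ?_⟩
      have key : (w * refl P γ) (P.root (P.reflectionPerm γ i₀)) = w (P.root i₀) := by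
        rw [mul_app, refl_apply_root, P.reflectionPerm_self]
      rw [key]
      exact hneg

lemma ninv_mul_refl_pos (hP : P.IsCrystallographic) (hreg : Regular P f)
    (hSL : ∀ i j : ι, P.pairing i j = P.pairing j i) {γ : ι} (hγ : IsSimple P f γ)
    {w : V ≃ₗ[ℝ] V} (hw : RootPerm P w) (hpos : 0 < f (w (P.root γ))) :
    ninv P f (w * refl P γ) = ninv P f w + 1 := by
  rw [ninv, invSet_mul_refl hP hreg hSL hγ hw hpos]
  rw [Finset.card_insert_of_notMem, Finset.card_image_of_injective _
    (P.reflectionPerm γ).injective]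
  · rfl
  · simp only [Finset.mem_image, not_exists]
    rintro i₀ ⟨hmem, hfalse⟩
    have : i₀ = P.reflectionPerm γ γ := by
      have := congrArg (P.reflectionPerm γ) hfalse
      rwa [P.reflectionPerm_self γ i₀] at this
    obtain ⟨hi₀, -⟩ := mem_invSet.mp hmem
    have hfneg : f (P.root i₀) < 0 := by
      rw [this, root_neg, map_neg]
      have : 0 < f (P.root γ) := hγ.1
      linarith
    exact absurd hi₀ (not_lt.mpr (le_of_lt hfneg))

lemma ninv_mul_refl_neg (hP : P.IsCrystallographic) (hreg : Regular P f)
    (hSL : ∀ i j : ι, P.pairing i j = P.pairing j i) {γ : ι} (hγ : IsSimple P f γ)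
    {w : V ≃ₗ[ℝ] V} (hw : RootPerm P w) (hneg : f (w (P.root γ)) < 0) :
    ninv P f w = ninv P f (w * refl P γ) + 1 := by
  have hsq : w * refl P γ * refl P γ = w := by
    rw [mul_assoc, refl_mul_self, mul_one]
  have h2 : 0 < f ((w * refl P γ) (P.root γ)) := by
    have key : (w * refl P γ) (P.root γ) = w (- P.root γ) := by
      rw [mul_app, refl_apply_self]
    rw [key, map_neg, map_neg]
    linarith
  have := ninv_mul_refl_pos hP hreg hSL hγ (hw.mul (RootPerm.of_refl γ)) h2
  rwa [hsq] at this

lemma f_ne_zero_of_rootPerm (hreg : Regular P f) {w : V ≃ₗ[ℝ] V} (hw : RootPerm P w) (j : ι) :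
    f (w (P.root j)) ≠ 0 := by
  obtain ⟨π, hπ⟩ := hw
  rw [hπ]
  exact hreg _

lemma ninv_le_length (hP : P.IsCrystallographic) (hreg : Regular P f)
    (hSL : ∀ i j : ι, P.pairing i j = P.pairing j i) (l : List ι)
    (hl : ∀ i ∈ l, IsSimple P f i) :
    ninv P f ((l.map (refl P)).prod) ≤ l.length := by
  induction l using List.reverseRecOn with
  | nil => simp [ninv_one]
  | append_singleton l γ ih =>
    have hl' : ∀ i ∈ l, IsSimple P f i := fun i hi => hl i (by simp [hi])
    have hγ : IsSimple P f γ := hl γ (by simp)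
    have hprod : ((l ++ [γ]).map (refl P)).prod = (l.map (refl P)).prod * refl P γ := by
      rw [List.map_append, List.prod_append, List.map_singleton, List.prod_singleton]
    set w := (l.map (refl P)).prod with hwdef
    have hw : RootPerm P w := RootPerm.prod l
    have hne := f_ne_zero_of_rootPerm hreg hw γ
    rw [hprod, List.length_append, List.length_singleton]
    rcases hne.lt_or_gt with hneg | hpos
    · have h := ninv_mul_refl_neg hP hreg hSL hγ hw hneg
      have := ih hl'
      omega
    · have h := ninv_mul_refl_pos hP hreg hSL hγ hw hpos
      have := ih hl'
      omega

lemma ninv_inv (hreg : Regular P f) {w : V ≃ₗ[ℝ] V} (hw : RootPerm P w) :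
    ninv P f w⁻¹ = ninv P f w := by
  obtain ⟨π, hπ⟩ := hw
  have hπinv : ∀ j, w⁻¹ (P.root j) = P.root (π⁻¹ j) := RootPerm.inv_apply hπ
  symm
  refine Finset.card_bij' (fun a _ => P.reflectionPerm (π a) (π a))
    (fun b _ => P.reflectionPerm (π⁻¹ b) (π⁻¹ b)) ?_ ?_ ?_ ?_
  · intro a ha
    obtain ⟨hpa, hna⟩ := mem_invSet.mp ha
    refine mem_invSet.mpr ⟨?_, ?_⟩
    · show 0 < f (P.root (P.reflectionPerm (π a) (π a)))
      rw [root_neg, map_neg, ← hπ]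
      linarith
    · rw [root_neg, map_neg, ← hπ, inv_app, map_neg]
      have : 0 < f (P.root a) := hpa
      linarith
  · intro b hb
    obtain ⟨hpb, hnb⟩ := mem_invSet.mp hb
    refine mem_invSet.mpr ⟨?_, ?_⟩
    · show 0 < f (P.root (P.reflectionPerm (π⁻¹ b) (π⁻¹ b)))
      rw [root_neg, map_neg, ← hπinv]
      linarith
    · rw [root_neg, map_neg, ← hπinv, app_inv, map_neg]
      have : 0 < f (P.root b) := hpb
      linarith
  · intro a ha
    apply P.root.injective
    rw [root_neg, ← hπinv, root_neg, map_neg, ← hπ, inv_app, neg_neg]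
  · intro b hb
    apply P.root.injective
    rw [root_neg, ← hπ, root_neg, map_neg, ← hπinv, app_inv, neg_neg]

end Aux3

section Aux4

open RootPairing Finset
open scoped Classical

variable {P f}

/-- The number of positive roots with smaller `f`-value; an induction measure. -/
def mu (P : RootSystem ι ℝ V V') (f : V →ₗ[ℝ] ℝ) (k : ι) : ℕ :=
  (Finset.univ.filter fun j => Pos P f j ∧ f (P.root j) < f (P.root k)).card

lemma mu_lt {i k : ι} (hik : f (P.root i) < f (P.root k)) (hi : Pos P f i) :
    mu P f i < mu P f k := by
  apply Finset.card_lt_card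
  rw [Finset.ssubset_iff_of_subset]
  · exact ⟨i, by simp only [Finset.mem_filter, Finset.mem_univ, true_and]; exact ⟨hi, hik⟩,
      by simp only [Finset.mem_filter, Finset.mem_univ, true_and, not_and]; intro _; exact lt_irrefl _⟩
  · intro j hj
    simp only [Finset.mem_filter, Finset.mem_univ, true_and] at hj ⊢
    exact ⟨hj.1, lt_trans hj.2 hik⟩

lemma exists_simple_decomp (hreg : Regular P f) :
    ∀ n (k : ι), mu P f k ≤ n → Pos P f k →
      ∃ L : List ι, (∀ γ ∈ L, IsSimple P f γ) ∧ L ≠ [] ∧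
        (L.map (fun t => P.root t)).sum = P.root k := by
  intro n
  induction n with
  | zero =>
    intro k hmu hk
    by_cases hs : IsSimple P f k
    · exact ⟨[k], by intro γ hγ; rw [List.mem_singleton] at hγ; rw [hγ]; exact hs,
        by simp, by simp⟩
    · exfalso
      have hdec : ∃ i j : ι, Pos P f i ∧ Pos P f j ∧ P.root k = P.root i + P.root j := by
        by_contra hcon
        exact hs ⟨hk, hcon⟩
      obtain ⟨i, j, hi, hj, hsum⟩ := hdec
      have hfi : f (P.root i) < f (P.root k) := by
        have := congrArg f hsum
        rw [map_add] at this
        have hj' : 0 < f (P.root j) := hj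
        linarith
      have := mu_lt hfi hi
      omega
  | succ n ih =>
    intro k hmu hk
    by_cases hs : IsSimple P f k
    · exact ⟨[k], by intro γ hγ; rw [List.mem_singleton] at hγ; rw [hγ]; exact hs,
        by simp, by simp⟩
    · have hdec : ∃ i j : ι, Pos P f i ∧ Pos P f j ∧ P.root k = P.root i + P.root j := by
        by_contra hcon
        exact hs ⟨hk, hcon⟩
      obtain ⟨i, j, hi, hj, hsum⟩ := hdec
      have hfi : f (P.root i) < f (P.root k) := by
        have := congrArg f hsum
        rw [map_add] at this
        have hj' : 0 < f (P.root j) := hj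
        linarith
      have hfj : f (P.root j) < f (P.root k) := by
        have := congrArg f hsum
        rw [map_add] at this
        have hi' : 0 < f (P.root i) := hi
        linarith
      have hmui : mu P f i ≤ n := by have := mu_lt hfi hi; omega
      have hmuj : mu P f j ≤ n := by have := mu_lt hfj hj; omega
      obtain ⟨Li, hLi, hLine, hLisum⟩ := ih i hmui hi
      obtain ⟨Lj, hLj, hLjne, hLjsum⟩ := ih j hmuj hj
      refine ⟨Li ++ Lj, ?_, ?_, ?_⟩
      · intro γ hγ
        rcases List.mem_append.mp hγ with h | h
        · exact hLi γ h
        · exact hLj γ h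
      · simp [hLine]
      · rw [List.map_append, List.sum_append, hLisum, hLjsum, hsum]

lemma list_sum_nonpos : ∀ l : List ℝ, (∀ x ∈ l, x ≤ 0) → l.sum ≤ 0 := by
  intro l
  induction l with
  | nil => intro _; simp
  | cons a t ih =>
    intro h
    rw [List.sum_cons]
    have h1 := h a (by simp)
    have h2 := ih fun x hx => h x (by simp [hx])
    linarith

lemma exists_simple_pairing_one (hP : P.IsCrystallographic) (hreg : Regular P f)
    (hSL : ∀ i j : ι, P.pairing i j = P.pairing j i) {k : ι} (hk : Pos P f k)
    (hns : ¬ IsSimple P f k) :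
    ∃ γ, IsSimple P f γ ∧ P.pairing k γ = 1 := by
  obtain ⟨L, hLsimple, hLne, hLsum⟩ := exists_simple_decomp hreg (mu P f k) k le_rfl hk
  have hBpos : 0 < P.RootForm (P.root k) (P.root k) := rootForm_posdef <| P.ne_zero k
  by_contra hcon
  push_neg at hcon
  have hall : ∀ γ ∈ L, P.RootForm (P.root k) (P.root γ) ≤ 0 := by
    intro γ hγL
    have hγ := hLsimple γ hγL
    by_contra hgt
    push_neg at hgt
    have hpair : 0 < P.pairing k γ := by
      have h := rootForm_pairing (P := P) γ k
      nlinarith [rootForm_posdef (P := P) (P.ne_zero γ)]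
    rcases pairing_cases hP hSL k γ with h0 | h1 | hm1 | ⟨h2, heq⟩ | ⟨hm2, heq⟩
    · rw [h0] at hpair; linarith
    · exact hcon γ hγ h1
    · rw [hm1] at hpair; linarith
    · have hkγ : k = γ := P.root.injective heq
      exact hns (by rw [hkγ]; exact hγ)
    · rw [hm2] at hpair; linarith
  have hsum : P.RootForm (P.root k) (P.root k)
      = (L.map (fun γ => P.RootForm (P.root k) (P.root γ))).sum := by
    have h := map_list_sum (P.RootForm (P.root k)) (L.map (fun t => P.root t))
    rw [hLsum] at h
    rw [h, List.map_map]
    rfl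
  have : P.RootForm (P.root k) (P.root k) ≤ 0 := by
    rw [hsum]
    apply list_sum_nonpos
    intro x hx
    rw [List.mem_map] at hx
    obtain ⟨γ, hγL, rfl⟩ := hx
    exact hall γ hγL
  linarith

lemma refl_inv (k : ι) : (refl P k)⁻¹ = refl P k := P.reflection_inv k

lemma refl_reflectionPerm (γ j : ι) :
    refl P (P.reflectionPerm γ j) = refl P γ * refl P j * refl P γ := by
  apply LinearEquiv.ext
  intro x
  have h1 : (refl P γ * refl P j * refl P γ) x
      = P.reflection γ (P.reflection j (P.reflection γ x)) := rfl
  rw [h1]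
  show P.reflection (P.reflectionPerm γ j) x = _
  rw [P.reflection_apply (P.reflectionPerm γ j), P.reflection_apply j, map_sub, map_smul,
    P.reflection_same γ, coroot'_reflection, root_reflectionPerm]

lemma tworho_eq_sum (k : ι) :
    tworho P f k = ∑ i ∈ Finset.univ.filter (fun i => 0 < f (P.root i)), P.pairing i k := by
  rw [tworho, Finset.sum_filter]

lemma tworho_reflection (hP : P.IsCrystallographic) (hreg : Regular P f)
    (hSL : ∀ i j : ι, P.pairing i j = P.pairing j i) {γ : ι} (hγ : IsSimple P f γ) (m : ι) :
    tworho P f (P.reflectionPerm γ m) = tworho P f m - 2 * P.pairing γ m := by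
  set S := Finset.univ.filter (fun i => 0 < f (P.root i)) with hS
  have hγS : γ ∈ S := by
    rw [hS]
    simp only [Finset.mem_filter, Finset.mem_univ, true_and]
    exact hγ.1
  have h1 : tworho P f (P.reflectionPerm γ m) = ∑ i ∈ S, P.pairing (P.reflectionPerm γ i) m := by
    rw [tworho_eq_sum, ← hS]
    exact Finset.sum_congr rfl fun i _ => P.pairing_reflectionPerm γ i m
  have h3 : ∑ i ∈ S, P.pairing (P.reflectionPerm γ i) m
      = ∑ j ∈ S.image (P.reflectionPerm γ), P.pairing j m := by
    rw [Finset.sum_image]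
    intro a _ b _ hab
    exact (P.reflectionPerm γ).injective hab
  have h4 : S.image (P.reflectionPerm γ) = insert (P.reflectionPerm γ γ) (S.erase γ) := by
    ext j
    simp only [Finset.mem_image, Finset.mem_insert, Finset.mem_erase, hS,
      Finset.mem_filter, Finset.mem_univ, true_and]
    constructor
    · rintro ⟨i, hi, heq⟩
      rcases eq_or_ne i γ with heq2 | hne
      · left; rw [← heq, heq2]
      · right
        have hjγ : j ≠ γ := by
          intro hjeq
          have hiγ : i = P.reflectionPerm γ γ := by
            have h' := congrArg (P.reflectionPerm γ) heq
            rw [P.reflectionPerm_self γ i, hjeq] at h'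
            exact h'
          rw [hiγ, root_neg, map_neg] at hi
          have h0 : (0:ℝ) < f (P.root γ) := hγ.1
          linarith
        refine ⟨hjγ, ?_⟩
        have := pos_reflectionPerm_simple hP hreg hSL hγ (show Pos P f i from hi) hne
        rwa [heq] at this
    · rintro (heq | ⟨hjγ, hj⟩)
      · exact ⟨γ, hγ.1, heq.symm⟩
      · refine ⟨P.reflectionPerm γ j, ?_, P.reflectionPerm_self γ j⟩
        exact pos_reflectionPerm_simple hP hreg hSL hγ (show Pos P f j from hj) hjγ
  have h5 : P.reflectionPerm γ γ ∉ S.erase γ := by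
    rw [Finset.mem_erase]
    rintro ⟨-, hmem⟩
    rw [hS, Finset.mem_filter] at hmem
    obtain ⟨-, hmem⟩ := hmem
    rw [root_neg, map_neg] at hmem
    have h0 : (0:ℝ) < f (P.root γ) := hγ.1
    linarith
  rw [h1, h3, h4, Finset.sum_insert h5, P.pairing_reflectionPerm_self_left γ m,
    Finset.sum_erase_eq_sub hγS, tworho_eq_sum, ← hS]
  ring

end Aux4

section Main

open RootPairing Finset
open scoped Classical

variable {P f}

lemma simple_case (hP : P.IsCrystallographic) (hreg : Regular P f)
    (hSL : ∀ i j : ι, P.pairing i j = P.pairing j i) {k : ι} (hk : IsSimple P f k) :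
    (∃ l, Wrd P f (refl P k) l ∧ l.length = ninv P f (refl P k)) ∧
      ((ninv P f (refl P k) : ℝ) = tworho P f k - 1) := by
  have hinv : invSet P f (refl P k) = {k} := by
    ext i
    simp only [mem_invSet, Finset.mem_singleton]
    constructor
    · rintro ⟨hi, hneg⟩
      by_contra hne
      have hpos : 0 < f (P.root (P.reflectionPerm k i)) :=
        pos_reflectionPerm_simple hP hreg hSL hk hi hne
      have hre : P.root (P.reflectionPerm k i) = (refl P k) (P.root i) := P.root_reflectionPerm k i
      rw [hre] at hpos
      linarith
    · intro heq
      rw [heq]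
      refine ⟨hk.1, ?_⟩
      rw [refl_apply_self, map_neg]
      have h0 : (0:ℝ) < f (P.root k) := hk.1
      linarith
  have hninv : ninv P f (refl P k) = 1 := by rw [ninv, hinv, Finset.card_singleton]
  constructor
  · refine ⟨[k], ⟨?_, ?_⟩, ?_⟩
    · intro i hi
      rw [List.mem_singleton] at hi
      rw [hi]; exact hk
    · simp
    · rw [hninv, List.length_singleton]
  · rw [hninv]
    have htwo : tworho P f k = 2 := by
      have hkmem : k ∈ Finset.univ.filter (fun i => 0 < f (P.root i)) := by
        simp only [Finset.mem_filter, Finset.mem_univ, true_and]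
        exact hk.1
      rw [tworho_eq_sum, ← Finset.add_sum_erase _ _ hkmem, P.pairing_same]
      have hzero : ∑ i ∈ (Finset.univ.filter fun i => 0 < f (P.root i)).erase k,
          P.pairing i k = 0 := by
        apply Finset.sum_involution (g := fun i _ => P.reflectionPerm k i)
        · intro a ha
          have h1 : P.pairing (P.reflectionPerm k a) k = - P.pairing a k := by
            rw [← P.pairing_reflectionPerm k a k, P.pairing_reflectionPerm_self_right]
          rw [h1]; ring
        · intro a ha hane
          intro hfix
          apply hane
          have h' := congrArg P.root hfix
          rw [root_reflectionPerm, reflection_apply_root] at h'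
          have h'' : P.pairing a k • P.root k = 0 := by
            have := sub_eq_self.mp h'
            exact this
          rcases smul_eq_zero.mp h'' with h | h
          · rw [h]
          · exact absurd h (P.ne_zero k)
        · intro a ha
          rw [Finset.mem_erase, Finset.mem_filter] at ha
          obtain ⟨hane, -, hapos⟩ := ha
          rw [Finset.mem_erase, Finset.mem_filter]
          refine ⟨?_, Finset.mem_univ _, ?_⟩
          · intro hfalse
            have : a = P.reflectionPerm k k := by
              have h' := congrArg (P.reflectionPerm k) hfalse
              rwa [P.reflectionPerm_self] at h'
            rw [this, root_neg, map_neg] at hapos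
            have h0 : (0:ℝ) < f (P.root k) := hk.1
            linarith
          · exact pos_reflectionPerm_simple hP hreg hSL hk hapos hane
        · intro a ha
          exact P.reflectionPerm_self k a
      rw [hzero, add_zero]
    rw [htwo]
    norm_num

lemma main_aux (hP : P.IsCrystallographic) (hreg : Regular P f)
    (hSL : ∀ i j : ι, P.pairing i j = P.pairing j i) :
    ∀ n (k : ι), mu P f k ≤ n → Pos P f k →
      (∃ l, Wrd P f (refl P k) l ∧ l.length = ninv P f (refl P k)) ∧
        ((ninv P f (refl P k) : ℝ) = tworho P f k - 1) := by
  intro n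
  induction n with
  | zero =>
    intro k hmu hk
    by_cases hs : IsSimple P f k
    · exact simple_case hP hreg hSL hs
    · exfalso
      obtain ⟨γ, hγ, hpair⟩ := exists_simple_pairing_one hP hreg hSL hk hs
      -- k is not simple hence there is a positive root with smaller f-value: γ itself
      -- γ ≠ k, and either f(γ) < f(k) or f(k - γ) < 0 etc; simplest: b = σ γ k is positive
      -- with smaller f-value, contradicting mu = 0.
      have hkγ : k ≠ γ := fun h => hs (by rw [h]; exact hγ)
      set b := P.reflectionPerm γ k with hb
      have hrootb : P.root b = P.root k - P.root γ := by
        rw [hb, root_reflectionPerm, reflection_apply_root, hpair, one_smul]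
      have hposb : Pos P f b := by
        rcases (hreg b).lt_or_gt with hneg | hpos
        · exfalso
          set d := P.reflectionPerm b b with hd
          have hrootd : P.root d = P.root γ - P.root k := by
            rw [hd, root_neg, hrootb, neg_sub]
          refine hγ.2 ⟨k, d, hk, ?_, ?_⟩
          · show 0 < f (P.root d)
            rw [hrootd, map_sub]
            rw [hrootb, map_sub] at hneg
            linarith
          · rw [hrootd]; abel
        · exact hpos
      have hfblt : f (P.root b) < f (P.root k) := by
        rw [hrootb, map_sub]
        have h0 : (0:ℝ) < f (P.root γ) := hγ.1
        linarith
      have := mu_lt hfblt hposb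
      omega
  | succ n ih =>
    intro k hmu hk
    by_cases hs : IsSimple P f k
    · exact simple_case hP hreg hSL hs
    · obtain ⟨γ, hγ, hpair⟩ := exists_simple_pairing_one hP hreg hSL hk hs
      have hkγ : k ≠ γ := fun h => hs (by rw [h]; exact hγ)
      set b := P.reflectionPerm γ k with hb
      have hrootb : P.root b = P.root k - P.root γ := by
        rw [hb, root_reflectionPerm, reflection_apply_root, hpair, one_smul]
      have hkb : P.reflectionPerm γ b = k := by rw [hb]; exact P.reflectionPerm_self γ k
      have hposb : Pos P f b := by
        rcases (hreg b).lt_or_gt with hneg | hpos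
        · exfalso
          set d := P.reflectionPerm b b with hd
          have hrootd : P.root d = P.root γ - P.root k := by
            rw [hd, root_neg, hrootb, neg_sub]
          refine hγ.2 ⟨k, d, hk, ?_, ?_⟩
          · show 0 < f (P.root d)
            rw [hrootd, map_sub]
            rw [hrootb, map_sub] at hneg
            linarith
          · rw [hrootd]; abel
        · exact hpos
      have hfblt : f (P.root b) < f (P.root k) := by
        rw [hrootb, map_sub]
        have h0 : (0:ℝ) < f (P.root γ) := hγ.1
        linarith
      have hmub : mu P f b ≤ n := by
        have := mu_lt hfblt hposb
        omega
      obtain ⟨⟨lb, ⟨hlbs, hlbprod⟩, hlblen⟩, htwob⟩ := ih b hmub hposb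
      have hpbγ : P.pairing b γ = -1 := by
        have h1 : P.coroot' γ (P.root b) = P.pairing b γ := P.root_coroot'_eq_pairing γ b
        rw [← h1, hrootb, map_sub]
        have h2 : P.coroot' γ (P.root k) = P.pairing k γ := P.root_coroot'_eq_pairing γ k
        have h3 : P.coroot' γ (P.root γ) = P.pairing γ γ := P.root_coroot'_eq_pairing γ γ
        rw [h2, h3, hpair, P.pairing_same]
        norm_num
      have hpγb : P.pairing γ b = -1 := by rw [hSL]; exact hpbγ
      have hsb : (refl P b) (P.root γ) = P.root k := by
        show P.reflection b (P.root γ) = P.root k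
        rw [reflection_apply_root, hpγb, neg_one_smul, sub_neg_eq_add, hrootb]
        abel
      have hconj : refl P k = refl P γ * refl P b * refl P γ := by
        rw [← hkb]
        exact refl_reflectionPerm γ b
      have hw1 : RootPerm P (refl P b) := RootPerm.of_refl b
      have h1 : ninv P f (refl P b * refl P γ) = ninv P f (refl P b) + 1 := by
        apply ninv_mul_refl_pos hP hreg hSL hγ hw1
        rw [hsb]
        exact hk
      have hinv1 : (refl P b * refl P γ)⁻¹ = refl P γ * refl P b := by
        rw [mul_inv_rev, refl_inv, refl_inv]
      have h2 : ninv P f (refl P γ * refl P b) = ninv P f (refl P b) + 1 := by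
        rw [← hinv1, ninv_inv hreg (hw1.mul (RootPerm.of_refl γ))]
        exact h1
      have h3 : ninv P f (refl P k) = ninv P f (refl P b) + 2 := by
        have hx : 0 < f ((refl P γ * refl P b) (P.root γ)) := by
          rw [mul_app, hsb, refl_apply_root, ← hb]
          exact hposb
        have hstep := ninv_mul_refl_pos hP hreg hSL hγ ((RootPerm.of_refl γ).mul hw1) hx
        calc ninv P f (refl P k) = ninv P f (refl P γ * refl P b * refl P γ) := by rw [hconj]
          _ = ninv P f (refl P γ * refl P b) + 1 := hstep
          _ = ninv P f (refl P b) + 2 := by rw [h2]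
      have htwok : tworho P f k = tworho P f b + 2 := by
        have h := tworho_reflection hP hreg hSL hγ b
        rw [hkb, hpγb] at h
        linarith
      constructor
      · refine ⟨γ :: (lb ++ [γ]), ⟨?_, ?_⟩, ?_⟩
        · intro i hi
          rcases List.mem_cons.mp hi with heq | hi'
          · rw [heq]; exact hγ
          · rcases List.mem_append.mp hi' with h | h
            · exact hlbs i h
            · rw [List.mem_singleton] at h
              rw [h]; exact hγ
        · rw [List.map_cons, List.prod_cons, List.map_append, List.prod_append,
            List.map_singleton, List.prod_singleton, hlbprod, hconj, mul_assoc]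
        · rw [h3, ← hlblen]
          simp
      · rw [h3, htwok]
        push_cast
        rw [htwob]
        ring

end Main

/-- in a simply-laced root system, `ℓ(s_α) = ⟨2ρ, α^∨⟩ - 1` for every
positive root `α`. -/
theorem reflection_length_eq_of_simply_laced (hP : P.IsCrystallographic) (hred : Reduced P) (hreg : Regular P f)
    (hSL : ∀ i j : ι, P.pairing i j = P.pairing j i) (k : ι) (hk : Pos P f k) :
    (len P f (refl P k) : ℝ) = tworho P f k - 1 := by
  obtain ⟨⟨l, hWrd, hlen⟩, htwo⟩ := main_aux hP hreg hSL (mu P f k) k le_rfl hk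
  have hle : len P f (refl P k) ≤ ninv P f (refl P k) := by
    unfold len
    exact Nat.sInf_le ⟨l, hWrd, hlen⟩
  have hge : ninv P f (refl P k) ≤ len P f (refl P k) := by
    unfold len
    apply le_csInf
    · exact ⟨l.length, l, hWrd, rfl⟩
    rintro m ⟨l', ⟨hs', hprod'⟩, hlen'⟩
    have h := ninv_le_length hP hreg hSL l' hs'
    rw [hprod'] at h
    omega
  have heq : len P f (refl P k) = ninv P f (refl P k) := le_antisymm hle hge
  rw [heq, htwo]

end QBG
end
end

section
/- An element w of a finite Coxeter group satisfies ℓ_R(w) = ℓ(w) (reflection length equals Coxeter length) if and only if w is a standard parabolic Coxeter element, i.e., some (equivalently every) reduced expression for w uses each simple reflection at most once. -/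
noncomputable section
namespace RLEaux

open Real CoxeterSystem

variable {B : Type*} (M : CoxeterMatrix B)

/-- The bilinear form coefficients of the geometric representation. -/
def kk (i j : B) : ℝ := -Real.cos (Real.pi / M i j)

lemma kk_diag (i : B) : kk M i i = 1 := by
  simp [kk, M.diagonal i]

lemma kk_symm (i j : B) : kk M i j = kk M j i := by
  rw [kk, kk, M.isSymm.apply i j]

/-- simple root -/
def al (i : B) : B →₀ ℝ := Finsupp.single i 1

lemma al_ne_zero (i : B) : al i ≠ 0 := by
  simp [al, Finsupp.single_eq_zero]

/-- the linear functional `v ↦ B(α_i, v)` -/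
def ff (i : B) : (B →₀ ℝ) →ₗ[ℝ] ℝ := Finsupp.linearCombination ℝ (kk M i)

lemma ff_al (i j : B) : ff M i (al j) = kk M i j := by
  simp [ff, al, Finsupp.linearCombination_single]

/-- the simple reflection in the geometric representation -/
def sig (i : B) : Module.End ℝ (B →₀ ℝ) :=
  LinearMap.id - (2:ℝ) • ((ff M i).smulRight (al i))

lemma sig_apply (i : B) (v : B →₀ ℝ) : sig M i v = v - (2 * ff M i v) • al i := by
  simp [sig, mul_smul]

lemma sig_al (i j : B) : sig M i (al j) = al j - (2 * kk M i j) • al i := by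
  rw [sig_apply, ff_al]

lemma sig_al_self (i : B) : sig M i (al i) = - al i := by
  rw [sig_al, kk_diag]
  module

lemma ff_sig (i : B) (v : B →₀ ℝ) : ff M i (sig M i v) = - ff M i v := by
  rw [sig_apply, map_sub, map_smul, ff_al, kk_diag, smul_eq_mul]
  ring

lemma sig_fix_iff (i : B) (v : B →₀ ℝ) : sig M i v = v ↔ ff M i v = 0 := by
  rw [sig_apply]
  constructor
  · intro h
    have h2 : (2 * ff M i v) • al i = 0 := by
      have := sub_eq_iff_eq_add.mp h
      linear_combination (norm := module) -this
    rcases smul_eq_zero.mp h2 with h3 | h3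
    · linarith
    · exact absurd h3 (al_ne_zero i)
  · intro h; rw [h]; simp

lemma sig_sig (i : B) (v : B →₀ ℝ) : sig M i (sig M i v) = v := by
  rw [sig_apply M i (sig M i v), ff_sig, sig_apply]
  module


variable (i j : B)

lemma L_al_i : (sig M i * sig M j) (al i)
    = (4 * kk M i j ^ 2 - 1) • al i - (2 * kk M i j) • al j := by
  rw [Module.End.mul_apply, sig_al M j i, map_sub, map_smul, sig_al_self M i, sig_al M i j,
    kk_symm M j i]
  module

lemma L_al_j : (sig M i * sig M j) (al j) = (2 * kk M i j) • al i - al j := by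
  rw [Module.End.mul_apply, sig_al_self, map_neg, sig_al]
  module

lemma L2_basis (v : B →₀ ℝ) (hv : v = al i ∨ v = al j) :
    (sig M i * sig M j) ((sig M i * sig M j) v)
      = (4 * kk M i j ^ 2 - 2) • ((sig M i * sig M j) v) - v := by
  rcases hv with rfl | rfl <;>
  · simp only [L_al_i, L_al_j, map_sub, map_smul]
    module

/-- generic Chebyshev-style power formula -/
lemma pow_formula {V : Type*} [AddCommGroup V] [Module ℝ V] (L : Module.End ℝ V)
    (γ : ℝ) (u : ℕ → ℝ) (h0 : u 0 = 0) (h1 : u 1 = 1)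
    (hrec : ∀ p, u (p + 2) = γ * u (p + 1) - u p) (v : V)
    (hv : L (L v) = γ • L v - v) :
    ∀ p, (L ^ (p + 1)) v = u (p + 1) • L v - u p • v := by
  intro p
  induction p with
  | zero => simp [h0, h1]
  | succ p ih =>
    have : L ^ (p + 2) = L * L ^ (p + 1) := by rw [← pow_succ']
    rw [this, Module.End.mul_apply, ih, map_sub, map_smul, map_smul, hv, hrec p]
    module

def useq (θ : ℝ) (p : ℕ) : ℝ := Real.sin (2 * p * θ) / Real.sin (2 * θ)

lemma useq_zero (θ : ℝ) : useq θ 0 = 0 := by simp [useq]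

lemma useq_one {θ : ℝ} (hs : Real.sin (2 * θ) ≠ 0) : useq θ 1 = 1 := by
  rw [useq]; push_cast; rw [mul_assoc, one_mul, div_self hs]

lemma useq_rec {θ : ℝ} (hs : Real.sin (2 * θ) ≠ 0) (p : ℕ) :
    useq θ (p + 2) = (2 * Real.cos (2 * θ)) * useq θ (p + 1) - useq θ p := by
  have key : Real.sin (2 * ((p : ℝ) + 2) * θ)
      = 2 * Real.cos (2 * θ) * Real.sin (2 * ((p : ℝ) + 1) * θ) - Real.sin (2 * (p : ℝ) * θ) := by
    have h1 := Real.sin_add (2 * ((p : ℝ) + 1) * θ) (2 * θ)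
    have h2 := Real.sin_sub (2 * ((p : ℝ) + 1) * θ) (2 * θ)
    have e1 : 2 * ((p : ℝ) + 2) * θ = 2 * ((p : ℝ) + 1) * θ + 2 * θ := by ring
    have e2 : 2 * (p : ℝ) * θ = 2 * ((p : ℝ) + 1) * θ - 2 * θ := by ring
    rw [e1, e2, h1, h2]; ring
  simp only [useq]; push_cast; rw [key]; ring


lemma theta_pos {m : ℕ} (hm : 2 ≤ m) : 0 < Real.pi / m :=
  div_pos Real.pi_pos (by positivity)

lemma sin_two_theta_ne_zero {m : ℕ} (hm : 3 ≤ m) :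
    Real.sin (2 * (Real.pi / m)) ≠ 0 := by
  have h1 : 0 < 2 * (Real.pi / m) := by
    have := theta_pos (m := m) (by omega); linarith
  have h2 : 2 * (Real.pi / m) < Real.pi := by
    have hm0 : (0:ℝ) < m := by positivity
    have hmul : (Real.pi / m) * m = Real.pi := div_mul_cancel₀ _ (ne_of_gt hm0)
    have hm3 : (3:ℝ) ≤ m := by exact_mod_cast hm
    nlinarith [theta_pos (m := m) (by omega : 2 ≤ m)]
  exact ne_of_gt (Real.sin_pos_of_pos_of_lt_pi h1 h2)

lemma kk_eq_neg_cos (i j : B) : kk M i j = -Real.cos (Real.pi / M i j) := rfl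

/-- power of the product of two simple geometric reflections on basis vectors -/
lemma L_pow_basis (hij : i ≠ j) (hm : 2 ≤ M i j) (v : B →₀ ℝ)
    (hv : v = al i ∨ v = al j) :
    ((sig M i * sig M j) ^ M i j) v = v := by
  rcases Nat.lt_or_ge (M i j) 3 with h3 | h3
  · -- m = 2, kk = 0
    have hm2 : M i j = 2 := by omega
    have hc : kk M i j = 0 := by
      rw [kk_eq_neg_cos, hm2]
      norm_num [Real.cos_pi_div_two]
    have hL : ∀ w : B →₀ ℝ, (w = al i ∨ w = al j) → (sig M i * sig M j) w = -w := by
      rintro w (rfl | rfl)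
      · rw [L_al_i, hc]; module
      · rw [L_al_j, hc]; module
    rw [hm2, pow_two, Module.End.mul_apply, hL v hv, map_neg, hL v hv, neg_neg]
  · -- m ≥ 3
    set m := M i j with hmdef
    set θ := Real.pi / m with hθ
    have hs : Real.sin (2 * θ) ≠ 0 := sin_two_theta_ne_zero h3
    have hγ : 4 * kk M i j ^ 2 - 2 = 2 * Real.cos (2 * θ) := by
      rw [kk_eq_neg_cos, Real.cos_two_mul, ← hmdef, ← hθ]; ring
    have hv2 := L2_basis M i j v hv
    rw [hγ] at hv2
    obtain ⟨p, hp⟩ : ∃ p, m = p + 1 := ⟨m - 1, by omega⟩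
    have hpow := pow_formula (sig M i * sig M j) (2 * Real.cos (2 * θ)) (useq θ)
      (useq_zero θ) (useq_one hs) (useq_rec hs) v hv2 p
    rw [← hp] at hpow
    have humid : 2 * ((m : ℝ)) * θ = 2 * Real.pi := by
      rw [hθ]; field_simp
    have hum : useq θ m = 0 := by
      rw [useq, humid, Real.sin_two_pi, zero_div]
    have hump : useq θ p = -1 := by
      have hpm : (p : ℝ) = (m : ℝ) - 1 := by
        have : (m : ℝ) = (p : ℝ) + 1 := by exact_mod_cast hp
        linarith
      rw [useq, hpm]
      have harg : 2 * ((m : ℝ) - 1) * θ = 2 * Real.pi - 2 * θ := by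
        have : 2 * ((m:ℝ)) * θ = 2 * Real.pi := humid
        ring_nf
        ring_nf at this
        linarith
      rw [harg, Real.sin_sub, Real.sin_two_pi, Real.cos_two_pi]
      field_simp
      ring
    rw [hum, hump] at hpow
    rw [hpow]
    module

lemma kk_sq_lt_one (hij : i ≠ j) (hm : 2 ≤ M i j) : kk M i j ^ 2 < 1 := by
  have h1 : 0 < Real.pi / M i j := theta_pos hm
  have h2 : Real.pi / M i j < Real.pi := by
    rw [div_lt_iff₀ (by positivity : (0:ℝ) < (M i j : ℝ))]
    have : (2:ℝ) ≤ M i j := by exact_mod_cast hm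
    nlinarith [Real.pi_pos]
  have hsin : 0 < Real.sin (Real.pi / M i j) := Real.sin_pos_of_pos_of_lt_pi h1 h2
  have := Real.sin_sq_add_cos_sq (Real.pi / M i j)
  rw [kk_eq_neg_cos]
  nlinarith

/-- the braid relation holds everywhere -/
lemma L_pow_fix (hij : i ≠ j) (hm : 2 ≤ M i j) (v : B →₀ ℝ) :
    ((sig M i * sig M j) ^ M i j) v = v := by
  set c := kk M i j with hc
  have hc2 : c ^ 2 < 1 := kk_sq_lt_one M i j hij hm
  have h1c : 1 - c ^ 2 ≠ 0 := by nlinarith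
  set a := (ff M i v - c * ff M j v) / (1 - c ^ 2) with ha
  set b := (ff M j v - c * ff M i v) / (1 - c ^ 2) with hb
  set z := v - a • al i - b • al j with hz
  have hzi : ff M i z = 0 := by
    rw [hz, map_sub, map_sub, map_smul, map_smul, ff_al, ff_al, kk_diag, ha, hb, ← hc]
    field_simp
    linear_combination (-(ff M i v)) * mul_inv_cancel₀ h1c
  have hzj : ff M j z = 0 := by
    rw [hz, map_sub, map_sub, map_smul, map_smul, ff_al, ff_al, kk_diag, ha, hb,
      kk_symm M j i, ← hc]
    field_simp
    linear_combination (-(ff M j v)) * mul_inv_cancel₀ h1c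
  have hLz : ∀ n : ℕ, ((sig M i * sig M j) ^ n) z = z := by
    intro n
    induction n with
    | zero => simp
    | succ n ih =>
      rw [pow_succ', Module.End.mul_apply, ih, Module.End.mul_apply,
        (sig_fix_iff M j z).mpr hzj, (sig_fix_iff M i z).mpr hzi]
  have hvz : v = a • al i + b • al j + z := by rw [hz]; module
  rw [hvz, map_add, map_add, map_smul, map_smul,
    L_pow_basis M i j hij hm (al i) (Or.inl rfl),
    L_pow_basis M i j hij hm (al j) (Or.inr rfl), hLz]

/-- The geometric representation is liftable. -/
lemma isLiftable : M.IsLiftable (fun i => sig M i) := by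
  intro i j
  rcases eq_or_ne i j with rfl | hij
  · rw [M.diagonal i, pow_one]
    exact LinearMap.ext fun v => by
      rw [Module.End.mul_apply, sig_sig, Module.End.one_apply]
  · rcases Nat.eq_zero_or_pos (M i j) with h0 | hpos
    · rw [h0, pow_zero]
    · have hm : 2 ≤ M i j := by
        have := M.off_diagonal i j hij
        omega
      exact LinearMap.ext fun v => by
        rw [L_pow_fix M i j hij hm v, Module.End.one_apply]


variable {W : Type*} [Group W] {M} (cs : CoxeterSystem M W)

/-- the geometric representation of the Coxeter group -/
def rho : W →* Module.End ℝ (B →₀ ℝ) := cs.lift ⟨fun i => sig M i, isLiftable M⟩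

lemma rho_simple (i : B) : rho cs (cs.simple i) = sig M i :=
  cs.lift_apply_simple (isLiftable M) i

lemma rho_cancel (x : W) (v : B →₀ ℝ) : rho cs x⁻¹ (rho cs x v) = v := by
  rw [← Module.End.mul_apply, ← map_mul, inv_mul_cancel, map_one, Module.End.one_apply]

lemma rho_cancel' (x : W) (v : B →₀ ℝ) : rho cs x (rho cs x⁻¹ v) = v := by
  rw [← Module.End.mul_apply, ← map_mul, mul_inv_cancel, map_one, Module.End.one_apply]

lemma rho_fix_iff {t : W} (x : W) (i : B) (ht : t = x * cs.simple i * x⁻¹) (v : B →₀ ℝ) :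
    rho cs t v = v ↔ ff M i (rho cs x⁻¹ v) = 0 := by
  have key : rho cs t v = rho cs x (sig M i (rho cs x⁻¹ v)) := by
    rw [ht, map_mul, map_mul, rho_simple, Module.End.mul_apply, Module.End.mul_apply]
  rw [← sig_fix_iff]
  constructor
  · intro h
    have h2 : rho cs x⁻¹ (rho cs x (sig M i (rho cs x⁻¹ v))) = rho cs x⁻¹ v := by
      rw [← key, h]
    rwa [rho_cancel] at h2
  · intro h
    rw [key, h, rho_cancel']

/-- standard positive definite form on `B →₀ ℝ` -/
def dotB : (B →₀ ℝ) →ₗ[ℝ] (B →₀ ℝ) →ₗ[ℝ] ℝ :=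
  Finsupp.lsum ℝ (fun b => LinearMap.toSpanSingleton ℝ _ (Finsupp.lapply b))

lemma dotB_apply (u v : B →₀ ℝ) : dotB u v = ∑ b ∈ u.support, u b * v b := by
  have h1 : dotB u = u.sum fun b c => c • Finsupp.lapply b := by
    rw [dotB, Finsupp.lsum_apply]
    rfl
  rw [h1, Finsupp.sum, LinearMap.sum_apply]
  simp [Finsupp.lapply, smul_eq_mul]

lemma dotB_self_nonneg (v : B →₀ ℝ) : 0 ≤ dotB v v := by
  rw [dotB_apply]
  exact Finset.sum_nonneg fun b _ => mul_self_nonneg _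

lemma dotB_self_pos {v : B →₀ ℝ} (hv : v ≠ 0) : 0 < dotB v v := by
  rw [dotB_apply]
  obtain ⟨b, hb⟩ := Finsupp.ne_iff.mp hv
  rw [Finsupp.coe_zero, Pi.zero_apply] at hb
  refine Finset.sum_pos' (fun c _ => mul_self_nonneg _) ⟨b, ?_, ?_⟩
  · exact Finsupp.mem_support_iff.mpr hb
  · exact mul_self_pos.mpr hb


section G
variable [Fintype W]

/-- averaged invariant inner product -/
def GG : (B →₀ ℝ) →ₗ[ℝ] (B →₀ ℝ) →ₗ[ℝ] ℝ :=
  ∑ x : W, (dotB.compl₁₂ (rho cs x : (B →₀ ℝ) →ₗ[ℝ] (B →₀ ℝ)) (rho cs x))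

lemma GG_apply (u v : B →₀ ℝ) : GG cs u v = ∑ x : W, dotB (rho cs x u) (rho cs x v) := by
  rw [GG, LinearMap.sum_apply]
  rw [LinearMap.sum_apply]
  simp only [LinearMap.compl₁₂_apply]

lemma GG_inv (y : W) (u v : B →₀ ℝ) : GG cs (rho cs y u) (rho cs y v) = GG cs u v := by
  rw [GG_apply, GG_apply]
  refine Fintype.sum_equiv (Equiv.mulRight y) _ _ fun x => ?_
  rw [← Module.End.mul_apply, ← map_mul, ← Module.End.mul_apply (rho cs x) (rho cs y) v, ← map_mul]
  rfl

lemma GG_posdef {v : B →₀ ℝ} (h : GG cs v v = 0) : v = 0 := by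
  by_contra hv
  rw [GG_apply] at h
  have h1 := (Finset.sum_eq_zero_iff_of_nonneg
    (fun x _ => dotB_self_nonneg (rho cs x v))).mp h 1 (Finset.mem_univ 1)
  rw [map_one, Module.End.one_apply] at h1
  exact absurd h1 (ne_of_gt (dotB_self_pos hv))

lemma GG_perp (i : B) (v : B →₀ ℝ) (h : ff M i v = 0) : GG cs (al i) v = 0 := by
  have hfix : rho cs (cs.simple i) v = v := by
    rw [rho_simple]; exact (sig_fix_iff M i v).mpr h
  have hi := GG_inv cs (cs.simple i) (al i) v
  rw [hfix, rho_simple, sig_al_self, map_neg, LinearMap.neg_apply] at hi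
  linarith

end G

lemma diff_mem_span (ω : List B) (v : B →₀ ℝ) :
    rho cs (cs.wordProd ω) v - v ∈ Submodule.span ℝ (al '' {i | i ∈ ω}) := by
  induction ω with
  | nil => simp [cs.wordProd_nil]
  | cons i ω ih =>
    rw [cs.wordProd_cons, map_mul, Module.End.mul_apply, rho_simple, sig_apply]
    set X := rho cs (cs.wordProd ω) v with hX
    have hsub : Submodule.span ℝ (al '' {i' | i' ∈ ω})
        ≤ Submodule.span ℝ (al '' {i' | i' ∈ i :: ω}) := by
      apply Submodule.span_mono
      apply Set.image_mono
      intro x hx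
      simp only [Set.mem_setOf_eq, List.mem_cons] at *
      tauto
    have hai : al i ∈ Submodule.span ℝ (al (B := B) '' {i' | i' ∈ i :: ω}) :=
      Submodule.subset_span ⟨i, by simp, rfl⟩
    have hm := Submodule.add_mem _ (hsub ih)
      (Submodule.smul_mem _ (-(2 * ff M i X)) hai)
    convert hm using 1
    module

lemma coord_zero {S : Set B} {i : B} (hi : i ∉ S) {v : B →₀ ℝ}
    (hv : v ∈ Submodule.span ℝ (al '' S)) : v i = 0 := by
  induction hv using Submodule.span_induction with
  | mem x hx =>
    obtain ⟨j, hj, rfl⟩ := hx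
    have hne : j ≠ i := fun h => hi (h ▸ hj)
    simp [al, Finsupp.single_apply, hne]
  | zero => simp
  | add x y _ _ hx hy => simp [hx, hy]
  | smul c x _ hx => simp [hx]

lemma cancel (ω : List B) (hnd : ω.Nodup) (v : B →₀ ℝ)
    (hfix : rho cs (cs.wordProd ω) v = v) : ∀ i ∈ ω, ff M i v = 0 := by
  induction ω with
  | nil => simp
  | cons i ω ih =>
    rw [List.nodup_cons] at hnd
    obtain ⟨hi, hnd'⟩ := hnd
    set X := rho cs (cs.wordProd ω) v with hX
    have hXv : X - v ∈ Submodule.span ℝ (al '' {i' | i' ∈ ω}) := diff_mem_span cs ω v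
    have heq : X - (2 * ff M i X) • al i = v := by
      rw [cs.wordProd_cons, map_mul, Module.End.mul_apply, rho_simple, sig_apply] at hfix
      exact hfix
    have h2 : X - v = (2 * ff M i X) • al i := by rw [← heq]; module
    have hzero : (X - v) i = 0 := coord_zero (by simpa using hi) hXv
    rw [h2] at hzero
    have hffX : ff M i X = 0 := by
      simp only [Finsupp.smul_apply, al, Finsupp.single_eq_same, smul_eq_mul,
        mul_one] at hzero
      linarith
    have hXv' : X = v := by rw [← heq, hffX]; simp
    intro i' hi'
    rcases List.mem_cons.mp hi' with rfl | hmem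
    · rw [← hXv']; exact hffX
    · exact ih hnd' (by rw [hX] at hXv'; exact hXv') i' hmem

lemma list_prod_fix (T : List W) (v : B →₀ ℝ) (h : ∀ t ∈ T, rho cs t v = v) :
    rho cs T.prod v = v := by
  induction T with
  | nil => simp [map_one]
  | cons t T ih =>
    rw [List.prod_cons, map_mul, Module.End.mul_apply, ih (fun t' ht' => h t' (List.mem_cons_of_mem _ ht')),
      h t List.mem_cons_self]


lemma al_injective : Function.Injective (al (B := B)) :=
  Finsupp.single_left_injective one_ne_zero

lemma nodup_length_le [Finite W] (ω : List B) (hnd : ω.Nodup) (T : List W)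
    (hT : ∀ t ∈ T, cs.IsReflection t) (hprod : T.prod = cs.wordProd ω) :
    ω.length ≤ T.length := by
  classical
  haveI := Fintype.ofFinite W
  -- reflection data
  have hdat : ∀ n : Fin T.length, ∃ x : W, ∃ i : B,
      T.get n = x * cs.simple i * x⁻¹ := fun n => hT (T.get n) (T.get_mem n)
  choose xw iw hxw using hdat
  set φ : Fin T.length → ((B →₀ ℝ) →ₗ[ℝ] ℝ) :=
    fun n => (ff M (iw n)).comp (rho cs (xw n)⁻¹ : (B →₀ ℝ) →ₗ[ℝ] (B →₀ ℝ)) with hφ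
  set U := Submodule.span ℝ (al '' {i | i ∈ ω}) with hU
  set Φ : U →ₗ[ℝ] (Fin T.length → ℝ) := (LinearMap.pi φ).comp U.subtype with hΦ
  have hinj : Function.Injective Φ := by
    rw [injective_iff_map_eq_zero]
    intro u hu
    have hfixall : ∀ t ∈ T, rho cs t (u : B →₀ ℝ) = (u : B →₀ ℝ) := by
      intro t ht'
      obtain ⟨n, rfl⟩ := List.mem_iff_get.mp ht'
      rw [rho_fix_iff cs (xw n) (iw n) (hxw n)]
      have h0 := congrFun (congrArg (fun f => f) hu) n
      have : Φ u n = 0 := by rw [hu]; rfl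
      rw [hΦ, LinearMap.comp_apply, LinearMap.pi_apply, hφ, LinearMap.comp_apply] at this
      exact this
    have hfixw : rho cs (cs.wordProd ω) (u : B →₀ ℝ) = (u : B →₀ ℝ) := by
      rw [← hprod]; exact list_prod_fix cs T _ hfixall
    have hff : ∀ i ∈ ω, ff M i (u : B →₀ ℝ) = 0 := cancel cs ω hnd _ hfixw
    have hGG : ∀ i ∈ ω, GG cs (al i) (u : B →₀ ℝ) = 0 :=
      fun i hi => GG_perp cs i _ (hff i hi)
    have hGv : GG cs (u : B →₀ ℝ) (u : B →₀ ℝ) = 0 := by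
      have key : ∀ x, x ∈ Submodule.span ℝ (al '' {i | i ∈ ω}) →
          GG cs x (u : B →₀ ℝ) = 0 := by
        intro x hx
        induction hx using Submodule.span_induction with
        | mem x hx =>
          obtain ⟨j, hj, rfl⟩ := hx
          exact hGG j hj
        | zero => simp
        | add x y _ _ hx hy => rw [map_add, LinearMap.add_apply, hx, hy, add_zero]
        | smul c x _ hx => rw [map_smul, LinearMap.smul_apply, hx, smul_zero]
      exact key _ u.2
    have : (u : B →₀ ℝ) = 0 := GG_posdef cs hGv
    exact Subtype.ext this
  have h1 : Module.finrank ℝ U ≤ T.length := by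
    have := LinearMap.finrank_le_finrank_of_injective hinj
    rwa [Module.finrank_fintype_fun_eq_card, Fintype.card_fin] at this
  have h2 : Module.finrank ℝ U = ω.length := by
    have hfin : (al '' {i | i ∈ ω}).Finite := (ω.finite_toSet).image _
    haveI : Fintype (al '' {i | i ∈ ω} : Set (B →₀ ℝ)) := hfin.fintype
    haveI : Fintype ({i | i ∈ ω} : Set B) := (ω.finite_toSet).fintype
    haveI := Classical.decEq (B →₀ ℝ)
    have hli : LinearIndependent ℝ (Subtype.val : (al '' {i | i ∈ ω} : Set (B →₀ ℝ)) → (B →₀ ℝ)) := by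
      have hbase : LinearIndependent ℝ (fun i : B => al (B := B) i) := by
        have := (Finsupp.basisSingleOne (R := ℝ) (ι := B)).linearIndependent
        simpa [al, Finsupp.coe_basisSingleOne] using this
      have hrange := hbase.linearIndepOn_id
      exact hrange.mono (Set.image_subset_range _ _)
    rw [hU, finrank_span_set_eq_card hli]
    rw [Set.toFinset_image]
    rw [Finset.card_image_of_injective _ al_injective]
    have : {i | i ∈ ω}.toFinset = ω.toFinset := by
      ext x; simp
    rw [this, List.toFinset_card_of_nodup hnd]
  omega


lemma exists_dup {α : Type*} (l : List α) (h : ¬ l.Nodup) :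
    ∃ (a : List α) (i : α) (b : List α) (c : List α), l = a ++ i :: (b ++ i :: c) := by
  induction l with
  | nil => simp at h
  | cons x xs ih =>
    by_cases hx : x ∈ xs
    · obtain ⟨b, c, rfl⟩ := List.append_of_mem hx
      exact ⟨[], x, b, c, rfl⟩
    · have hxs : ¬ xs.Nodup := fun hn => h (List.nodup_cons.mpr ⟨hx, hn⟩)
      obtain ⟨a, i, b, c, rfl⟩ := ih hxs
      exact ⟨x :: a, i, b, c, rfl⟩

lemma conj_prod (y : W) (b : List B) :
    (b.map fun j => y * cs.simple j * y⁻¹).prod = y * cs.wordProd b * y⁻¹ := by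
  induction b with
  | nil => simp
  | cons j b ih =>
    rw [List.map_cons, List.prod_cons, ih, cs.wordProd_cons]
    group

end RLEaux

end


open RLEaux

/-- in a finite Coxeter group, the reflection length of `w` equals its
Coxeter length if and only if `w` is a standard parabolic Coxeter element, i.e.
every reduced word for `w` uses each simple reflection at most once. -/
theorem reflection_length_eq_length_iff {B W : Type*} [Group W] [Finite W]
    {M : CoxeterMatrix B} (cs : CoxeterSystem M W) (w : W) :
    sInf {r : ℕ | ∃ l : List W, (∀ t ∈ l, cs.IsReflection t) ∧ l.length = r ∧
        l.prod = w} = cs.length w ↔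
      ∀ l : List B, cs.wordProd l = w → l.length = cs.length w → l.Nodup := by
  classical
  set S : Set ℕ := {r : ℕ | ∃ l : List W, (∀ t ∈ l, cs.IsReflection t) ∧ l.length = r ∧
        l.prod = w} with hS
  obtain ⟨ω₀, hω₀red, hω₀⟩ := cs.exists_reduced_word w
  have hω₀len : ω₀.length = cs.length w := by rw [hω₀]; exact hω₀red.symm
  have hmem : cs.length w ∈ S := by
    refine ⟨ω₀.map cs.simple, ?_, by simp [hω₀len], ?_⟩
    · intro t ht
      obtain ⟨i, _, rfl⟩ := List.mem_map.mp ht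
      exact cs.isReflection_simple i
    · rw [hω₀]; rfl
  have hle : sInf S ≤ cs.length w := Nat.sInf_le hmem
  constructor
  · intro h l hl hlen
    by_contra hnd
    obtain ⟨a, i, b, c, rfl⟩ := exists_dup _ hnd
    set T : List W := (a.map cs.simple)
      ++ (b.map fun j => cs.simple i * cs.simple j * (cs.simple i)⁻¹)
      ++ (c.map cs.simple) with hT
    have hTrefl : ∀ t ∈ T, cs.IsReflection t := by
      intro t ht
      simp only [hT, List.mem_append, List.mem_map] at ht
      rcases ht with (⟨j, _, rfl⟩ | ⟨j, _, rfl⟩) | ⟨j, _, rfl⟩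
      · exact cs.isReflection_simple j
      · exact (cs.isReflection_simple j).conj _
      · exact cs.isReflection_simple j
    have hTprod : T.prod = w := by
      rw [hT, List.prod_append, List.prod_append, conj_prod]
      have ha : (a.map cs.simple).prod = cs.wordProd a := rfl
      have hc : (c.map cs.simple).prod = cs.wordProd c := rfl
      rw [ha, hc, ← hl, cs.wordProd_append, cs.wordProd_cons, cs.wordProd_append,
        cs.wordProd_cons, cs.inv_simple]
      group
    have hlen2 : 2 + (a.length + b.length + c.length) = cs.length w := by
      rw [← hlen]
      simp
      omega
    have h2 : sInf S ≤ a.length + b.length + c.length :=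
      Nat.sInf_le ⟨T, hTrefl, by simp [hT]; omega, hTprod⟩
    omega
  · intro hnodup
    refine le_antisymm hle ?_
    obtain ⟨T, hTrefl, hTlen, hTprod⟩ := Nat.sInf_mem (⟨_, hmem⟩ : S.Nonempty)
    have hnd : ω₀.Nodup := hnodup ω₀ hω₀.symm hω₀len
    have hll := nodup_length_le cs ω₀ hnd T hTrefl (by rw [hTprod, hω₀])
    rw [hω₀len, hTlen] at hll
    exact hll
end
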